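/- Let d1, d2, K, β be positive real numbers. There exists a pair (f,m) of strictly positive real numbers satisfying the steady-state system F1(f,m) = 0 and F2(f,m) = 0 if and only if β ≥ β0 = 8(d1+d2)/K. -/

import Mathlib

/-- There exists a strictly positive steady state `(f,m)` of the system
`F₁(f,m) = 0`, `F₂(f,m) = 0` iff `β ≥ β₀ = 8(d₁+d₂)/K`. -/
theorem stmt13 (d1 d2 K β : ℝ) (hd1 : 0 < d1) (hd2 : 0 < d2) (hK : 0 < K) (hβ : 0 < β) :
    (∃ f m : ℝ, 0 < f ∧ 0 < m ∧
        β / 2 * f * m * (1 - (f + m) / K) - d1 * f = 0 ∧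
        β / 2 * f * m * (1 - (f + m) / K) - d2 * m = 0) ↔
      β ≥ 8 * (d1 + d2) / K := by
  have hK' : K ≠ 0 := hK.ne'
  have hβ' : (β : ℝ) ≠ 0 := hβ.ne'
  constructor
  · rintro ⟨f, m, hf, hm, h1, h2⟩
    rw [ge_iff_le, div_le_iff₀ hK]
    have h1' : β * f * (m * (K - (f + m))) = 2 * d1 * f * K := by
      field_simp at h1
      linear_combination h1
    have h2' : β * m * (f * (K - (f + m))) = 2 * d2 * m * K := by
      field_simp at h2
      linear_combination h2
    have h1'' : β * m * (K - (f + m)) = 2 * d1 * K := by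
      apply mul_left_cancel₀ hf.ne'
      linear_combination h1'
    have h2'' : β * f * (K - (f + m)) = 2 * d2 * K := by
      apply mul_left_cancel₀ hm.ne'
      linear_combination h2'
    nlinarith [mul_nonneg hβ.le (sq_nonneg (K - 2 * (f + m))), hK, sq_nonneg (f + m)]
  · intro hb
    obtain ⟨S, hSdef⟩ : ∃ S : ℝ, S = d1 + d2 := ⟨_, rfl⟩
    have hS : 0 < S := by rw [hSdef]; positivity
    have h8 : 8 * S ≤ β * K := by
      rw [ge_iff_le, div_le_iff₀ hK] at hb
      rw [hSdef]; linarith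
    have hD : 0 ≤ K ^ 2 - 8 * S * K / β := by
      have : 8 * S * K / β ≤ K ^ 2 := by
        rw [div_le_iff₀ hβ]
        nlinarith
      linarith
    obtain ⟨r, hrdef⟩ : ∃ r : ℝ, r = Real.sqrt (K ^ 2 - 8 * S * K / β) := ⟨_, rfl⟩
    have hr2 : r ^ 2 = K ^ 2 - 8 * S * K / β := by rw [hrdef]; exact Real.sq_sqrt hD
    have hr0 : 0 ≤ r := by rw [hrdef]; exact Real.sqrt_nonneg _
    have hrK : r < K := by
      have hpos : 0 < 8 * S * K / β := by positivity
      nlinarith [hr2, hpos, hr0]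
    obtain ⟨t, htdef⟩ : ∃ t : ℝ, t = (K - r) / 2 := ⟨_, rfl⟩
    have ht : 0 < t := by rw [htdef]; linarith
    have key : β * (t * (K - t)) = 2 * S * K := by
      have htk : t * (K - t) = 2 * S * K / β := by
        rw [htdef]
        linear_combination (-1 / 4 : ℝ) * hr2
      rw [htk]; field_simp
    have hfm : d2 * t / S + d1 * t / S = t := by
      rw [hSdef]
      field_simp
      ring
    refine ⟨d2 * t / S, d1 * t / S, by positivity, by positivity, ?_, ?_⟩
    · rw [hfm]
      have hS' := hS.ne'
      field_simp
      linear_combination (d1 * d2 * t) * key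
    · rw [hfm]
      have hS' := hS.ne'
      field_simp
      linear_combination (d1 * d2 * t) * key
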